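/- Variance bound for the conditioned function, second order (Proposition 3.2 ii). Let ℓ₀ ∈ ℕ, let f : {0,1}^ℤ → ℝ be a local function with supp(f) ⊆ {1,…,ℓ₀}, and fix ρ ∈ (0,1) with φ_f(ρ) = 0 and φ_f'(ρ) = 0. Then there exists a constant c = c(f,ρ) such that Var(ψ_f(ℓ); ν_ρ) ≤ c/ℓ² for every ℓ ≥ ℓ₀. -/

import Mathlib

open MeasureTheory Finset
open scoped Nat

noncomputable section

/-- Configurations of the lattice gas: elements of `{0,1}^ℤ`, encoded as `ℤ → Bool`. -/
abbrev Cfg : Type := ℤ → Bool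

/-- The configuration whose occupied sites are exactly the finite set `S`. -/
def cfgOf (S : Finset ℤ) : Cfg := fun z => decide (z ∈ S)

/-- `f` depends only on the coordinates in the finite set `A`
(i.e. `f` is local with `supp f ⊆ A`). -/
def LocalOn (A : Finset ℤ) (f : Cfg → ℝ) : Prop :=
  ∀ η ξ : Cfg, (∀ x ∈ A, η x = ξ x) → f η = f ξ

/-- `f` is a local function. -/
def IsLocal (f : Cfg → ℝ) : Prop := ∃ A : Finset ℤ, LocalOn A f

/-- For `f` depending only on the coordinates in `A`, `phi A f β = ∫ f dν_β` where `ν_β`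
is the Bernoulli product measure of density `β`; written as an explicit polynomial in `β`. -/
def phi (A : Finset ℤ) (f : Cfg → ℝ) (β : ℝ) : ℝ :=
  ∑ S ∈ A.powerset, β ^ S.card * (1 - β) ^ (A.card - S.card) * f (cfgOf S)

/-- `ψ_f(ℓ; m)`: the average of `f` over all configurations of `{1,…,ℓ}`
having exactly `m` particles. -/
def condAvg (ℓ m : ℕ) (f : Cfg → ℝ) : ℝ :=
  (∑ S ∈ (Finset.Icc (1 : ℤ) (ℓ : ℤ)).powerset.filter (fun S => S.card = m), f (cfgOf S))
    / (ℓ.choose m : ℝ)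

/-- `μ` is the product Bernoulli measure on `{0,1}^ℤ` of density `ρ`: it is a probability
measure under which the coordinates are i.i.d. with `μ(η x = 1) = ρ`. -/
def IsBernoulliProduct (ρ : ℝ) (μ : Measure Cfg) : Prop :=
  IsProbabilityMeasure μ ∧
    ∀ (A : Finset ℤ) (σ : Cfg),
      (μ {η : Cfg | ∀ x ∈ A, η x = σ x}).toReal
        = ∏ x ∈ A, (if σ x then ρ else 1 - ρ)

/-- The number of particles of `η` in `{1,…,ℓ}`. -/
def numOnes (ℓ : ℕ) (η : Cfg) : ℕ := ∑ x ∈ Finset.Icc (1 : ℤ) (ℓ : ℤ), (η x).toNat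

/-- The empirical density `η^ℓ` of particles in `{1,…,ℓ}`. -/
def empDens (ℓ : ℕ) (η : Cfg) : ℝ := (numOnes ℓ η : ℝ) / (ℓ : ℝ)

/-- `ψ_f(ℓ)`: the conditional expectation of `f` given the particle number in `{1,…,ℓ}`,
as a function on configurations. -/
def psiFun (ℓ : ℕ) (f : Cfg → ℝ) : Cfg → ℝ := fun η => condAvg ℓ (numOnes ℓ η) f

/-- The variance of `g` with respect to the measure `μ`. -/
def Var (μ : Measure Cfg) (g : Cfg → ℝ) : ℝ := ∫ η, (g η - ∫ ξ, g ξ ∂μ) ^ 2 ∂μ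




def Bset (n : ℕ) : Finset ℤ := Finset.Icc 1 (n:ℤ)

lemma card_Bset (n : ℕ) : (Bset n).card = n := by
  rw [Bset, Int.card_Icc]; simp

lemma Bset_mono {a b : ℕ} (h : a ≤ b) : Bset a ⊆ Bset b := by
  apply Finset.Icc_subset_Icc_right; exact_mod_cast h

/-- Key independence expansion. -/
lemma sum_powerset_prod_ite (B : Finset ℤ) (a b : ℤ → ℝ) :
    ∑ S ∈ B.powerset, ∏ x ∈ B, (if x ∈ S then a x else b x) = ∏ x ∈ B, (a x + b x) := by
  rw [Finset.prod_add]
  refine Finset.sum_congr rfl fun S hS => ?_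
  rw [Finset.mem_powerset] at hS
  rw [← Finset.prod_sdiff hS, mul_comm]
  congr 1
  · exact Finset.prod_congr rfl fun x hx => if_pos hx
  · exact Finset.prod_congr rfl fun x hx => if_neg (Finset.mem_sdiff.mp hx).2

def wgt (ρ : ℝ) (B S : Finset ℤ) : ℝ := ∏ x ∈ B, (if x ∈ S then ρ else 1 - ρ)

lemma wgt_nonneg {ρ : ℝ} (h0 : 0 ≤ ρ) (h1 : ρ ≤ 1) (B S : Finset ℤ) : 0 ≤ wgt ρ B S :=
  Finset.prod_nonneg fun x _ => by split_ifs <;> linarith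

lemma wgt_sum (ρ : ℝ) (B : Finset ℤ) : ∑ S ∈ B.powerset, wgt ρ B S = 1 := by
  unfold wgt; rw [sum_powerset_prod_ite]; simp


lemma cyl_measurable (B : Finset ℤ) (σ : Cfg) :
    MeasurableSet {η : Cfg | ∀ x ∈ B, η x = σ x} := by
  have : {η : Cfg | ∀ x ∈ B, η x = σ x} = ⋂ x ∈ (B : Finset ℤ), {η : Cfg | η x = σ x} := by
    ext η; simp
  rw [this]
  refine MeasurableSet.biInter (B.countable_toSet) fun x _ => ?_
  have : {η : Cfg | η x = σ x} = (fun η : Cfg => η x) ⁻¹' {σ x} := by ext; simp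
  rw [this]
  exact (measurable_pi_apply x) (measurableSet_singleton (σ x))

lemma numOnes_eq_card (ℓ : ℕ) (η : Cfg) :
    numOnes ℓ η = ((Bset ℓ).filter (fun x => η x = true)).card := by
  rw [Finset.card_filter, numOnes]
  exact Finset.sum_congr rfl fun x _ => by cases η x <;> simp

lemma mem_cyl_iff (ℓ : ℕ) (η : Cfg) (S : Finset ℤ) (hS : S ⊆ Bset ℓ) :
    (∀ x ∈ Bset ℓ, η x = cfgOf S x) ↔ S = (Bset ℓ).filter (fun x => η x = true) := by
  constructor
  · intro h
    ext x
    simp only [Finset.mem_filter]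
    by_cases hx : x ∈ Bset ℓ
    · have := h x hx
      constructor
      · intro hxS; refine ⟨hx, ?_⟩; rw [this]; simpa [cfgOf]
      · rintro ⟨-, hxt⟩; rw [this] at hxt; simpa [cfgOf] using hxt
    · constructor
      · intro hxS; exact absurd (hS hxS) hx
      · rintro ⟨hc, -⟩; exact absurd hc hx
  · rintro rfl x hx
    simp only [cfgOf, Finset.mem_filter]
    cases hη : η x <;> simp [hη, hx]

lemma integral_fun_numOnes {ρ : ℝ} {μ : Measure Cfg} (hμ : IsBernoulliProduct ρ μ)
    (ℓ : ℕ) (G : ℕ → ℝ) :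
    ∫ η, G (numOnes ℓ η) ∂μ = ∑ S ∈ (Bset ℓ).powerset, wgt ρ (Bset ℓ) S * G S.card := by
  have hfun : (fun η => G (numOnes ℓ η))
      = fun η => ∑ S ∈ (Bset ℓ).powerset,
        Set.indicator {η' : Cfg | ∀ x ∈ Bset ℓ, η' x = cfgOf S x} (fun _ => G S.card) η := by
    funext η
    rw [Finset.sum_eq_single_of_mem ((Bset ℓ).filter (fun x => η x = true))
      (Finset.mem_powerset.mpr (Finset.filter_subset _ _))]
    · rw [Set.indicator_of_mem, numOnes_eq_card]
      exact fun x hx => ((mem_cyl_iff ℓ η _ (Finset.filter_subset _ _)).mpr rfl) x hx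
    · intro S hS hne
      rw [Set.indicator_of_notMem]
      intro hmem
      exact hne ((mem_cyl_iff ℓ η S (Finset.mem_powerset.mp hS)).mp hmem)
  rw [hfun, MeasureTheory.integral_finset_sum]
  · refine Finset.sum_congr rfl fun S hS => ?_
    rw [MeasureTheory.integral_indicator_const _ (cyl_measurable (Bset ℓ) (cfgOf S)),
      measureReal_def, hμ.2 (Bset ℓ) (cfgOf S), smul_eq_mul]
    congr 1
    refine Finset.prod_congr rfl fun x _ => ?_
    simp [cfgOf]
  · intro S hS
    haveI : IsProbabilityMeasure μ := hμ.1
    exact (integrable_const _).indicator (cyl_measurable (Bset ℓ) (cfgOf S))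


lemma var_le_second_moment {ρ : ℝ} {μ : Measure Cfg} (hμ : IsBernoulliProduct ρ μ)
    (ℓ : ℕ) (G : ℕ → ℝ) :
    Var μ (fun η => G (numOnes ℓ η))
      ≤ ∑ S ∈ (Bset ℓ).powerset, wgt ρ (Bset ℓ) S * (G S.card)^2 := by
  rw [Var]
  set a := ∫ ξ, G (numOnes ℓ ξ) ∂μ with ha
  have h1 : ∫ η, (G (numOnes ℓ η) - a)^2 ∂μ
      = ∑ S ∈ (Bset ℓ).powerset, wgt ρ (Bset ℓ) S * (G S.card - a)^2 :=
    integral_fun_numOnes hμ ℓ (fun m => (G m - a)^2)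
  rw [h1]
  have ha2 : a = ∑ S ∈ (Bset ℓ).powerset, wgt ρ (Bset ℓ) S * G S.card :=
    integral_fun_numOnes hμ ℓ G
  have expand : ∀ S ∈ (Bset ℓ).powerset,
      wgt ρ (Bset ℓ) S * (G S.card - a)^2
        = wgt ρ (Bset ℓ) S * (G S.card)^2 - 2*a*(wgt ρ (Bset ℓ) S * G S.card)
            + a^2 * wgt ρ (Bset ℓ) S := fun S _ => by ring
  rw [Finset.sum_congr rfl expand, Finset.sum_add_distrib, Finset.sum_sub_distrib,
    ← Finset.mul_sum, ← Finset.mul_sum, wgt_sum, ← ha2]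
  nlinarith [sq_nonneg a]


def hfib (ℓ₀ ℓ m : ℕ) (T : Finset ℤ) : ℕ :=
  (((Bset ℓ).powerset.filter (fun S => S.card = m)).filter (fun S => S ∩ Bset ℓ₀ = T)).card

lemma condAvg_repr (ℓ₀ ℓ m : ℕ) (f : Cfg → ℝ) (hf : LocalOn (Bset ℓ₀) f) :
    condAvg ℓ m f = ∑ T ∈ (Bset ℓ₀).powerset,
      f (cfgOf T) * ((hfib ℓ₀ ℓ m T : ℝ) / (ℓ.choose m : ℝ)) := by
  have key : ∑ S ∈ (Bset ℓ).powerset.filter (fun S => S.card = m), f (cfgOf S)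
      = ∑ T ∈ (Bset ℓ₀).powerset, (hfib ℓ₀ ℓ m T : ℝ) * f (cfgOf T) := by
    have h1 : ∀ S ∈ (Bset ℓ).powerset.filter (fun S => S.card = m),
        f (cfgOf S) = f (cfgOf (S ∩ Bset ℓ₀)) := by
      intro S _
      exact hf _ _ (fun x hx => by simp [cfgOf, Finset.mem_inter, hx])
    rw [Finset.sum_congr rfl h1,
      ← Finset.sum_fiberwise_of_maps_to (g := fun S => S ∩ Bset ℓ₀)
        (t := (Bset ℓ₀).powerset)
        (fun S _ => Finset.mem_powerset.mpr Finset.inter_subset_right)]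
    refine Finset.sum_congr rfl fun T _ => ?_
    rw [show (hfib ℓ₀ ℓ m T : ℝ) * f (cfgOf T) = (hfib ℓ₀ ℓ m T) • f (cfgOf T) by
      simp [nsmul_eq_mul], hfib, ← Finset.sum_const]
    refine Finset.sum_congr rfl fun S hS => ?_
    rw [(Finset.mem_filter.mp hS).2]
  rw [condAvg]
  show (∑ S ∈ (Bset ℓ).powerset.filter (fun S => S.card = m), f (cfgOf S)) / _ = _
  rw [key, Finset.sum_div]
  exact Finset.sum_congr rfl fun T _ => by ring

lemma hfib_sum (ℓ₀ ℓ m : ℕ) (hl : ℓ₀ ≤ ℓ) :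
    ∑ T ∈ (Bset ℓ₀).powerset, hfib ℓ₀ ℓ m T = ℓ.choose m := by
  simp only [hfib]
  rw [← Finset.card_eq_sum_card_fiberwise
    (f := fun S => S ∩ Bset ℓ₀) (t := (Bset ℓ₀).powerset)
    (fun S _ => Finset.mem_powerset.mpr Finset.inter_subset_right)]
  rw [← Finset.powersetCard_eq_filter, Finset.card_powersetCard, card_Bset]

lemma hfib_le (ℓ₀ ℓ m : ℕ) (T : Finset ℤ) : hfib ℓ₀ ℓ m T ≤ ℓ.choose m := by
  calc hfib ℓ₀ ℓ m T ≤ ((Bset ℓ).powerset.filter (fun S => S.card = m)).card :=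
        Finset.card_le_card (Finset.filter_subset _ _)
    _ = ℓ.choose m := by
        rw [← Finset.powersetCard_eq_filter, Finset.card_powersetCard, card_Bset]

lemma hfib_zero₁ (ℓ₀ ℓ m : ℕ) (T : Finset ℤ) (hm : m < T.card) : hfib ℓ₀ ℓ m T = 0 := by
  rw [hfib, Finset.card_eq_zero, Finset.filter_eq_empty_iff]
  intro S hS hST
  rw [Finset.mem_filter] at hS
  have : T.card ≤ S.card := hST ▸ Finset.card_le_card Finset.inter_subset_left
  omega

lemma hfib_zero₂ (ℓ₀ ℓ m : ℕ) (T : Finset ℤ) (hl : ℓ₀ ≤ ℓ) (hk : T.card ≤ m)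
    (h2 : ℓ - ℓ₀ < m - T.card) : hfib ℓ₀ ℓ m T = 0 := by
  rw [hfib, Finset.card_eq_zero, Finset.filter_eq_empty_iff]
  intro S hS hST
  rw [Finset.mem_filter, Finset.mem_powerset] at hS
  have hsub : S \ Bset ℓ₀ ⊆ Bset ℓ \ Bset ℓ₀ := Finset.sdiff_subset_sdiff hS.1 (le_refl _)
  have hcard : (S \ Bset ℓ₀).card = m - T.card := by
    have h4 := Finset.card_sdiff_add_card_inter S (Bset ℓ₀)
    rw [hST] at h4
    omega
  have h3 : (Bset ℓ \ Bset ℓ₀).card = ℓ - ℓ₀ := by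
    rw [Finset.card_sdiff_of_subset (Bset_mono hl), card_Bset, card_Bset]
  have := Finset.card_le_card hsub
  omega

lemma hfib_card (ℓ₀ ℓ m : ℕ) (T : Finset ℤ) (hT : T ⊆ Bset ℓ₀) (hl : ℓ₀ ≤ ℓ)
    (hk : T.card ≤ m) (h2 : m - T.card ≤ ℓ - ℓ₀) :
    hfib ℓ₀ ℓ m T = (ℓ - ℓ₀).choose (m - T.card) := by
  have hc : (ℓ - ℓ₀).choose (m - T.card)
      = (Finset.powersetCard (m - T.card) (Bset ℓ \ Bset ℓ₀)).card := by
    rw [Finset.card_powersetCard, Finset.card_sdiff_of_subset (Bset_mono hl), card_Bset, card_Bset]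
  rw [hfib, hc]
  refine Finset.card_bij' (fun S _ => S \ Bset ℓ₀) (fun U _ => U ∪ T) ?_ ?_ ?_ ?_
  · intro S hS
    rw [Finset.mem_filter, Finset.mem_filter, Finset.mem_powerset] at hS
    rw [Finset.mem_powersetCard]
    constructor
    · exact Finset.sdiff_subset_sdiff hS.1.1 (le_refl _)
    · have h4 := Finset.card_sdiff_add_card_inter S (Bset ℓ₀)
      rw [hS.2] at h4
      have h5 := hS.1.2
      omega
  · intro U hU
    rw [Finset.mem_powersetCard] at hU
    have hUB : U ⊆ Bset ℓ := hU.1.trans (Finset.sdiff_subset)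
    have hUA : Disjoint U (Bset ℓ₀) := Finset.disjoint_of_subset_left hU.1 Finset.sdiff_disjoint
    rw [Finset.mem_filter, Finset.mem_filter, Finset.mem_powerset]
    refine ⟨⟨Finset.union_subset hUB (hT.trans (Bset_mono hl)), ?_⟩, ?_⟩
    · rw [Finset.card_union_of_disjoint
        (Finset.disjoint_of_subset_right hT hUA), hU.2]
      omega
    · rw [Finset.union_inter_distrib_right, Finset.inter_eq_left.mpr hT,
        (Finset.disjoint_iff_inter_eq_empty.mp hUA), Finset.empty_union]
  · intro S hS
    rw [Finset.mem_filter] at hS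
    have hint : S ∩ Bset ℓ₀ = T := hS.2
    rw [← hint]
    ext x; simp only [Finset.mem_union, Finset.mem_inter, Finset.mem_sdiff]; tauto
  · intro U hU
    rw [Finset.mem_powersetCard] at hU
    have hUA : Disjoint U (Bset ℓ₀) := Finset.disjoint_of_subset_left hU.1 Finset.sdiff_disjoint
    rw [Finset.union_sdiff_distrib, Finset.sdiff_eq_self_of_disjoint hUA,
      Finset.sdiff_eq_empty_iff_subset.mpr hT, Finset.union_empty]

lemma cast_descFactorial_real {n k : ℕ} (h : k ≤ n) :
    (n.descFactorial k : ℝ) = (n : ℕ)! / ((n - k : ℕ))! := by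
  have h1 := Nat.factorial_mul_descFactorial h
  have h2 : ((n - k)! : ℝ) ≠ 0 := by positivity
  field_simp
  rw [mul_comm]
  exact_mod_cast h1

lemma choose_ratio_identity (ℓ₀ ℓ m k : ℕ) (hk : k ≤ ℓ₀) (hl : ℓ₀ ≤ ℓ) (hm : m ≤ ℓ)
    (hkm : k ≤ m) (h2 : m - k ≤ ℓ - ℓ₀) :
    ((ℓ - ℓ₀).choose (m - k) : ℝ) * (ℓ.descFactorial ℓ₀ : ℝ)
      = (ℓ.choose m : ℝ) * (m.descFactorial k : ℝ) * ((ℓ - m).descFactorial (ℓ₀ - k) : ℝ) := by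
  have e1 : ((ℓ - ℓ₀).choose (m - k) : ℝ) = (ℓ - ℓ₀)! / ((m - k)! * (ℓ - ℓ₀ - (m - k))!) :=
    Nat.cast_choose ℝ h2
  have e2 : (ℓ.choose m : ℝ) = ℓ ! / (m ! * (ℓ - m)!) := Nat.cast_choose ℝ hm
  have e3 : (ℓ.descFactorial ℓ₀ : ℝ) = ℓ ! / (ℓ - ℓ₀)! := cast_descFactorial_real hl
  have e4 : (m.descFactorial k : ℝ) = m ! / (m - k)! := cast_descFactorial_real hkm
  have e5 : ((ℓ - m).descFactorial (ℓ₀ - k) : ℝ) = (ℓ - m)! / (ℓ - m - (ℓ₀ - k))! :=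
    cast_descFactorial_real (by omega)
  rw [e1, e2, e3, e4, e5, show ℓ - ℓ₀ - (m - k) = ℓ - m - (ℓ₀ - k) from by omega]
  have f1 : ((ℓ - ℓ₀)! : ℝ) ≠ 0 := by positivity
  have f2 : ((m - k)! : ℝ) ≠ 0 := by positivity
  have f3 : ((ℓ - m - (ℓ₀ - k))! : ℝ) ≠ 0 := by positivity
  have f4 : ((m)! : ℝ) ≠ 0 := by positivity
  have f5 : ((ℓ - m)! : ℝ) ≠ 0 := by positivity
  field_simp

lemma cast_descFactorial_prod {n k : ℕ} (h : k ≤ n) :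
    (n.descFactorial k : ℝ) = ∏ j ∈ Finset.range k, ((n:ℝ) - j) := by
  rw [Nat.descFactorial_eq_prod_range, Nat.cast_prod]
  exact Finset.prod_congr rfl fun j hj => by
    rw [Finset.mem_range] at hj
    have : j ≤ n := by omega
    push_cast [Nat.cast_sub this]
    ring

lemma ratio_prod (ℓ₀ ℓ m k : ℕ) (hk : k ≤ ℓ₀) (hl : ℓ₀ ≤ ℓ) (hm : m ≤ ℓ)
    (hkm : k ≤ m) (h2 : m - k ≤ ℓ - ℓ₀) :
    ((ℓ - ℓ₀).choose (m - k) : ℝ) / (ℓ.choose m : ℝ)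
      = ∏ j ∈ Finset.range ℓ₀,
          (if j < k then (m:ℝ) - j else (ℓ:ℝ) - m - ((j:ℝ) - k)) / ((ℓ:ℝ) - j) := by
  have hnum : ∏ j ∈ Finset.range ℓ₀,
      (if j < k then (m:ℝ) - j else (ℓ:ℝ) - m - ((j:ℝ) - k))
      = (m.descFactorial k : ℝ) * ((ℓ - m).descFactorial (ℓ₀ - k) : ℝ) := by
    have hsplit := Finset.prod_range_add
      (fun j => (if j < k then (m:ℝ) - j else (ℓ:ℝ) - m - ((j:ℝ) - k))) k (ℓ₀ - k)
    rw [show k + (ℓ₀ - k) = ℓ₀ from by omega] at hsplit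
    rw [hsplit, cast_descFactorial_prod hkm,
      cast_descFactorial_prod (show ℓ₀ - k ≤ ℓ - m by omega)]
    congr 1
    · exact Finset.prod_congr rfl fun j hj => by
        rw [Finset.mem_range] at hj; rw [if_pos (by omega)]
    · refine Finset.prod_congr rfl fun i hi => ?_
      rw [if_neg (by omega)]
      push_cast [Nat.cast_sub hm]
      ring
  have hden : ∏ j ∈ Finset.range ℓ₀, ((ℓ:ℝ) - j) = (ℓ.descFactorial ℓ₀ : ℝ) :=
    (cast_descFactorial_prod hl).symm
  rw [Finset.prod_div_distrib, hnum, hden]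
  have g1 : (ℓ.choose m : ℝ) ≠ 0 := by
    exact_mod_cast (Nat.choose_pos hm).ne'
  have g2 : (ℓ.descFactorial ℓ₀ : ℝ) ≠ 0 :=
    Nat.cast_ne_zero.mpr (by simp only [ne_eq, Nat.descFactorial_eq_zero_iff_lt]; omega)
  rw [div_eq_div_iff g1 g2]
  linear_combination choose_ratio_identity ℓ₀ ℓ m k hk hl hm hkm h2

lemma abs_prod_sub_prod (n : ℕ) (c d : ℕ → ℝ)
    (hc : ∀ j, j < n → 0 ≤ c j ∧ c j ≤ 1) (hd : ∀ j, j < n → 0 ≤ d j ∧ d j ≤ 1) :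
    |∏ j ∈ Finset.range n, c j - ∏ j ∈ Finset.range n, d j|
      ≤ ∑ j ∈ Finset.range n, |c j - d j| := by
  induction n with
  | zero => simp
  | succ n ih =>
    rw [Finset.prod_range_succ, Finset.prod_range_succ, Finset.sum_range_succ]
    have ih' := ih (fun j hj => hc j (by omega)) (fun j hj => hd j (by omega))
    have hcn := hc n (by omega)
    have hQ0 : 0 ≤ ∏ j ∈ Finset.range n, d j :=
      Finset.prod_nonneg fun j hj =>
        (hd j (by have := Finset.mem_range.mp hj; omega)).1
    have hQ1 : ∏ j ∈ Finset.range n, d j ≤ 1 :=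
      Finset.prod_le_one
        (fun j hj => (hd j (by have := Finset.mem_range.mp hj; omega)).1)
        (fun j hj => (hd j (by have := Finset.mem_range.mp hj; omega)).2)
    have key : (∏ j ∈ Finset.range n, c j) * c n - (∏ j ∈ Finset.range n, d j) * d n
        = c n * ((∏ j ∈ Finset.range n, c j) - ∏ j ∈ Finset.range n, d j)
          + (c n - d n) * ∏ j ∈ Finset.range n, d j := by ring
    rw [key]
    calc |c n * ((∏ j ∈ Finset.range n, c j) - ∏ j ∈ Finset.range n, d j)
          + (c n - d n) * ∏ j ∈ Finset.range n, d j|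
        ≤ |c n| * |(∏ j ∈ Finset.range n, c j) - ∏ j ∈ Finset.range n, d j|
          + |c n - d n| * |∏ j ∈ Finset.range n, d j| := by
          refine (abs_add_le _ _).trans ?_; rw [abs_mul, abs_mul]
      _ ≤ 1 * (∑ j ∈ Finset.range n, |c j - d j|) + |c n - d n| * 1 := by
          have hb1 : |c n| ≤ 1 := by rw [abs_of_nonneg hcn.1]; exact hcn.2
          have hb2 : |∏ j ∈ Finset.range n, d j| ≤ 1 := by
            rw [abs_of_nonneg hQ0]; exact hQ1
          exact add_le_add (mul_le_mul hb1 ih' (abs_nonneg _) zero_le_one)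
            (mul_le_mul_of_nonneg_left hb2 (abs_nonneg _))
      _ = (∑ j ∈ Finset.range n, |c j - d j|) + |c n - d n| := by ring

set_option maxHeartbeats 1000000 in
lemma ratio_close (ℓ₀ ℓ m k : ℕ) (hk : k ≤ ℓ₀) (hl : 2*ℓ₀ ≤ ℓ) (hl1 : 1 ≤ ℓ) (hm : m ≤ ℓ)
    (hkm : k ≤ m) (h2 : m - k ≤ ℓ - ℓ₀) :
    |((ℓ - ℓ₀).choose (m - k) : ℝ)/(ℓ.choose m)
      - ((m:ℝ)/ℓ)^k * (1 - (m:ℝ)/ℓ)^(ℓ₀ - k)| ≤ 4*(ℓ₀:ℝ)^2/ℓ := by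
  have hL : (0:ℝ) < ℓ := by exact_mod_cast hl1
  have hML : (m:ℝ) ≤ ℓ := by exact_mod_cast hm
  have hkR : (k:ℝ) ≤ ℓ₀ := by exact_mod_cast hk
  have h2l : 2*(ℓ₀:ℝ) ≤ ℓ := by exact_mod_cast hl
  set p : ℝ := (m:ℝ)/ℓ with hp
  have hp0 : 0 ≤ p := by positivity
  have hp1 : p ≤ 1 := by rw [hp, div_le_one hL]; exact hML
  have hd_prod : p^k * (1-p)^(ℓ₀ - k)
      = ∏ j ∈ Finset.range ℓ₀, (if j < k then p else 1 - p) := by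
    have hsplit := Finset.prod_range_add (fun j => (if j < k then p else 1 - p)) k (ℓ₀ - k)
    rw [show k + (ℓ₀ - k) = ℓ₀ from by omega] at hsplit
    rw [hsplit]
    congr 1
    · rw [Finset.prod_congr rfl (fun j hj => if_pos (Finset.mem_range.mp hj)),
        Finset.prod_const, Finset.card_range]
    · rw [Finset.prod_congr rfl (fun i _ => if_neg (by omega)),
        Finset.prod_const, Finset.card_range]
  rw [ratio_prod ℓ₀ ℓ m k hk (by omega) hm hkm h2, hd_prod]
  have hcb : ∀ j, j < ℓ₀ →
      0 ≤ (if j < k then (m:ℝ) - j else (ℓ:ℝ) - m - ((j:ℝ) - k)) / ((ℓ:ℝ) - j)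
      ∧ (if j < k then (m:ℝ) - j else (ℓ:ℝ) - m - ((j:ℝ) - k)) / ((ℓ:ℝ) - j) ≤ 1 := by
    intro j hj
    have hjR : (j:ℝ) < ℓ₀ := by exact_mod_cast hj
    have hden : (0:ℝ) < (ℓ:ℝ) - j := by linarith
    have hnum0 : 0 ≤ (if j < k then (m:ℝ) - j else (ℓ:ℝ) - m - ((j:ℝ) - k)) := by
      split_ifs with h
      · have : (j:ℝ) < m := by exact_mod_cast lt_of_lt_of_le h hkm
        linarith
      · have hge : k ≤ j := by omega
        have h3 : m + ℓ₀ ≤ ℓ + k := by omega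
        have h3R : (m:ℝ) + ℓ₀ ≤ (ℓ:ℝ) + k := by exact_mod_cast h3
        linarith
    have hnum1 : (if j < k then (m:ℝ) - j else (ℓ:ℝ) - m - ((j:ℝ) - k)) ≤ (ℓ:ℝ) - j := by
      split_ifs with h
      · linarith
      · have hkm' : (k:ℝ) ≤ m := by exact_mod_cast hkm
        linarith
    exact ⟨div_nonneg hnum0 hden.le, (div_le_one hden).mpr hnum1⟩
  have hdb : ∀ j, j < ℓ₀ → 0 ≤ (if j < k then p else 1 - p)
      ∧ (if j < k then p else 1 - p) ≤ 1 := by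
    intro j _; split_ifs <;> constructor <;> linarith
  refine (abs_prod_sub_prod ℓ₀ _ _ hcb hdb).trans ?_
  have hterm : ∀ j ∈ Finset.range ℓ₀,
      |(if j < k then (m:ℝ) - j else (ℓ:ℝ) - m - ((j:ℝ) - k)) / ((ℓ:ℝ) - j)
        - (if j < k then p else 1 - p)| ≤ 4*(ℓ₀:ℝ)/ℓ := by
    intro j hj
    rw [Finset.mem_range] at hj
    have hjR : (j:ℝ) < ℓ₀ := by exact_mod_cast hj
    have hjR0 : (0:ℝ) ≤ j := by positivity
    have hden : (0:ℝ) < (ℓ:ℝ) - j := by linarith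
    have hhalf : (ℓ:ℝ)/2 ≤ (ℓ:ℝ) - j := by linarith
    have hℓ₀0 : (0:ℝ) ≤ (ℓ₀:ℝ) := by positivity
    split_ifs with h
    · have heq : ((m:ℝ) - j) / ((ℓ:ℝ) - j) - p
          = (((m:ℝ) - j)*ℓ - ((ℓ:ℝ) - j)*m) / (((ℓ:ℝ) - j)*ℓ) := by
        rw [hp, div_sub_div _ _ (ne_of_gt hden) (ne_of_gt hL)]
      rw [heq, show ((m:ℝ) - j)*ℓ - ((ℓ:ℝ) - j)*m = -((j:ℝ)*((ℓ:ℝ) - m)) from by ring,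
        abs_div, abs_neg, abs_of_nonneg (mul_nonneg hjR0 (by linarith)),
        abs_of_pos (mul_pos hden hL)]
      calc (j:ℝ)*((ℓ:ℝ)-m) / (((ℓ:ℝ) - j)*ℓ)
          ≤ (2*(ℓ₀:ℝ)*ℓ) / (((ℓ:ℝ)/2)*ℓ) :=
            div_le_div₀ (by positivity) (by nlinarith) (by positivity) (by nlinarith)
        _ = 4*(ℓ₀:ℝ)/ℓ := by
            rw [div_eq_div_iff (by positivity) (by positivity)]
            ring
    · have h1p : 1 - p = ((ℓ:ℝ) - m)/ℓ := by
        have hLne : (ℓ:ℝ) ≠ 0 := ne_of_gt hL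
        rw [hp]
        field_simp
      have heq : ((ℓ:ℝ) - m - ((j:ℝ) - k)) / ((ℓ:ℝ) - j) - (1 - p)
          = (((ℓ:ℝ) - m - ((j:ℝ) - k))*ℓ - ((ℓ:ℝ) - j)*((ℓ:ℝ) - m)) / (((ℓ:ℝ) - j)*ℓ) := by
        rw [h1p, div_sub_div _ _ (ne_of_gt hden) (ne_of_gt hL)]
      rw [heq, show ((ℓ:ℝ) - m - ((j:ℝ) - k))*ℓ - ((ℓ:ℝ) - j)*((ℓ:ℝ) - m)
          = (ℓ:ℝ)*k - (j:ℝ)*m from by ring,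
        abs_div, abs_of_pos (mul_pos hden hL)]
      have hnum : |(ℓ:ℝ)*k - (j:ℝ)*m| ≤ 2*(ℓ₀:ℝ)*ℓ := by
        refine (abs_sub _ _).trans ?_
        rw [abs_of_nonneg (by positivity), abs_of_nonneg (by positivity)]
        nlinarith
      calc |(ℓ:ℝ)*k - (j:ℝ)*m| / (((ℓ:ℝ) - j)*ℓ)
          ≤ (2*(ℓ₀:ℝ)*ℓ) / (((ℓ:ℝ)/2)*ℓ) :=
            div_le_div₀ (by positivity) hnum (by positivity) (by nlinarith)
        _ = 4*(ℓ₀:ℝ)/ℓ := by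
            rw [div_eq_div_iff (by positivity) (by positivity)]
            ring
  refine (Finset.sum_le_sum hterm).trans ?_
  rw [Finset.sum_const, Finset.card_range, nsmul_eq_mul]
  rw [show 4*(ℓ₀:ℝ)^2/ℓ = (ℓ₀:ℝ) * (4*(ℓ₀:ℝ)/ℓ) from by field_simp]


lemma hfib_ratio_close (ℓ₀ ℓ m : ℕ) (T : Finset ℤ) (hT : T ⊆ Bset ℓ₀)
    (hl : 2*ℓ₀ ≤ ℓ) (hl1 : 1 ≤ ℓ) (hm : m ≤ ℓ) :
    |(hfib ℓ₀ ℓ m T : ℝ)/(ℓ.choose m)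
      - ((m:ℝ)/ℓ)^T.card * (1 - (m:ℝ)/ℓ)^(ℓ₀ - T.card)| ≤ (4*(ℓ₀:ℝ)^2 + ℓ₀)/ℓ := by
  have hL : (0:ℝ) < ℓ := by exact_mod_cast hl1
  have hk : T.card ≤ ℓ₀ := by
    have := Finset.card_le_card hT; rwa [card_Bset] at this
  set k := T.card with hkdef
  set p : ℝ := (m:ℝ)/ℓ with hp
  have hp0 : 0 ≤ p := by positivity
  have hp1 : p ≤ 1 := by
    rw [hp, div_le_one hL]; exact_mod_cast hm
  have hq0 : 0 ≤ 1 - p := by linarith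
  have hq1 : 1 - p ≤ 1 := by linarith
  by_cases hkm : k ≤ m
  · by_cases h2 : m - k ≤ ℓ - ℓ₀
    · rw [hfib_card ℓ₀ ℓ m T hT (by omega) hkm h2]
      refine (ratio_close ℓ₀ ℓ m k hk hl hl1 hm hkm h2).trans ?_
      have : (0:ℝ) ≤ (ℓ₀:ℝ) := by positivity
      apply div_le_div_of_nonneg_right ?_ hL.le |>.trans (le_refl _)
      · linarith
    · rw [hfib_zero₂ ℓ₀ ℓ m T (by omega) hkm (by omega)]
      have hlm : ℓ - m < ℓ₀ - k := by omega
      have hk1 : 1 ≤ ℓ₀ - k := by omega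
      have hqsmall : 1 - p ≤ (ℓ₀:ℝ)/ℓ := by
        have h5 : 1 - p = ((ℓ:ℝ) - m)/ℓ := by
          rw [hp]; field_simp
        rw [h5]
        apply div_le_div_of_nonneg_right ?_ hL.le |>.trans (le_refl _)
        have : ℓ - m ≤ ℓ₀ := by omega
        have h6 : ((ℓ - m : ℕ):ℝ) ≤ (ℓ₀:ℝ) := by exact_mod_cast this
        rw [Nat.cast_sub hm] at h6
        linarith
      simp only [Nat.cast_zero, zero_div, zero_sub, abs_neg]
      have hb : p^k * (1-p)^(ℓ₀ - k) ≤ (ℓ₀:ℝ)/ℓ := by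
        calc p^k * (1-p)^(ℓ₀ - k) ≤ 1 * (1-p)^(ℓ₀ - k) :=
              mul_le_mul_of_nonneg_right (pow_le_one₀ hp0 hp1) (by positivity)
          _ = (1-p)^(ℓ₀ - k) := one_mul _
          _ ≤ (1-p) := pow_le_of_le_one hq0 hq1 (by omega)
          _ ≤ (ℓ₀:ℝ)/ℓ := hqsmall
      rw [abs_of_nonneg (by positivity)]
      refine hb.trans ?_
      apply div_le_div_of_nonneg_right ?_ hL.le |>.trans (le_refl _)
      nlinarith [sq_nonneg (ℓ₀:ℝ), Nat.cast_nonneg (α := ℝ) ℓ₀]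
  · rw [hfib_zero₁ ℓ₀ ℓ m T (by omega)]
    have hk1 : 1 ≤ k := by omega
    have hpsmall : p ≤ (ℓ₀:ℝ)/ℓ := by
      rw [hp]
      apply div_le_div_of_nonneg_right ?_ hL.le |>.trans (le_refl _)
      have : m ≤ ℓ₀ := by omega
      exact_mod_cast this
    simp only [Nat.cast_zero, zero_div, zero_sub, abs_neg]
    have hb : p^k * (1-p)^(ℓ₀ - k) ≤ (ℓ₀:ℝ)/ℓ := by
      calc p^k * (1-p)^(ℓ₀ - k) ≤ p^k * 1 :=
            mul_le_mul_of_nonneg_left (pow_le_one₀ hq0 hq1) (by positivity)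
        _ = p^k := mul_one _
        _ ≤ p := pow_le_of_le_one hp0 hp1 (by omega)
        _ ≤ (ℓ₀:ℝ)/ℓ := hpsmall
    rw [abs_of_nonneg (by positivity)]
    refine hb.trans ?_
    apply div_le_div_of_nonneg_right ?_ hL.le |>.trans (le_refl _)
    nlinarith [sq_nonneg (ℓ₀:ℝ), Nat.cast_nonneg (α := ℝ) ℓ₀]

def LocF (ℓ₀ : ℕ) (f : Cfg → ℝ) : ℝ := ∑ T ∈ (Bset ℓ₀).powerset, |f (cfgOf T)|

lemma LocF_nonneg (ℓ₀ : ℕ) (f : Cfg → ℝ) : 0 ≤ LocF ℓ₀ f :=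
  Finset.sum_nonneg fun T _ => abs_nonneg _

lemma condAvg_close (ℓ₀ ℓ m : ℕ) (f : Cfg → ℝ) (hf : LocalOn (Bset ℓ₀) f)
    (hl : 2*ℓ₀ ≤ ℓ) (hl1 : 1 ≤ ℓ) (hm : m ≤ ℓ) :
    |condAvg ℓ m f - phi (Bset ℓ₀) f ((m:ℝ)/ℓ)|
      ≤ LocF ℓ₀ f * ((4*(ℓ₀:ℝ)^2 + ℓ₀)/ℓ) := by
  rw [condAvg_repr ℓ₀ ℓ m f hf, phi, card_Bset]
  rw [← Finset.sum_sub_distrib]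
  refine (Finset.abs_sum_le_sum_abs _ _).trans ?_
  rw [LocF, Finset.sum_mul]
  refine Finset.sum_le_sum fun T hT => ?_
  rw [Finset.mem_powerset] at hT
  have key := hfib_ratio_close ℓ₀ ℓ m T hT hl hl1 hm
  calc |f (cfgOf T) * ((hfib ℓ₀ ℓ m T : ℝ) / (ℓ.choose m))
        - ((m:ℝ)/ℓ) ^ T.card * (1 - (m:ℝ)/ℓ) ^ (ℓ₀ - T.card) * f (cfgOf T)|
      = |f (cfgOf T)| * |(hfib ℓ₀ ℓ m T : ℝ)/(ℓ.choose m)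
          - ((m:ℝ)/ℓ)^T.card * (1 - (m:ℝ)/ℓ)^(ℓ₀ - T.card)| := by
        rw [← abs_mul]; congr 1; ring
    _ ≤ |f (cfgOf T)| * ((4*(ℓ₀:ℝ)^2 + ℓ₀)/ℓ) :=
        mul_le_mul_of_nonneg_left key (abs_nonneg _)

lemma condAvg_bound (ℓ₀ ℓ m : ℕ) (f : Cfg → ℝ) (hf : LocalOn (Bset ℓ₀) f)
    (hm : m ≤ ℓ) : |condAvg ℓ m f| ≤ LocF ℓ₀ f := by
  rw [condAvg_repr ℓ₀ ℓ m f hf]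
  refine (Finset.abs_sum_le_sum_abs _ _).trans ?_
  rw [LocF]
  refine Finset.sum_le_sum fun T hT => ?_
  have hc : (0:ℝ) < ℓ.choose m := by exact_mod_cast Nat.choose_pos hm
  have hr0 : (0:ℝ) ≤ (hfib ℓ₀ ℓ m T : ℝ)/(ℓ.choose m) := by positivity
  have hr1 : (hfib ℓ₀ ℓ m T : ℝ)/(ℓ.choose m) ≤ 1 := by
    rw [div_le_one hc]
    exact_mod_cast hfib_le ℓ₀ ℓ m T
  rw [abs_mul]
  calc |f (cfgOf T)| * |(hfib ℓ₀ ℓ m T : ℝ)/(ℓ.choose m)|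
      ≤ |f (cfgOf T)| * 1 := by
        refine mul_le_mul_of_nonneg_left ?_ (abs_nonneg _)
        rw [abs_of_nonneg hr0]; exact hr1
    _ = |f (cfgOf T)| := mul_one _

def Efun (ρ : ℝ) (n : ℕ) : ℝ := ρ*(1-ρ)^n + (1-ρ)*(-ρ)^n

def cnt (i j k l x : ℤ) : ℕ :=
  (if x = i then 1 else 0) + (if x = j then 1 else 0)
    + (if x = k then 1 else 0) + (if x = l then 1 else 0)

lemma Efun_one (ρ : ℝ) : Efun ρ 1 = 0 := by simp [Efun]; ring

lemma abs_Efun_le {ρ : ℝ} (h0 : 0 ≤ ρ) (h1 : ρ ≤ 1) (n : ℕ) : |Efun ρ n| ≤ 1 := by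
  have e1 : |ρ*(1-ρ)^n| ≤ ρ := by
    rw [abs_mul, abs_of_nonneg h0, abs_of_nonneg (pow_nonneg (by linarith) n)]
    calc ρ * (1-ρ)^n ≤ ρ * 1 :=
          mul_le_mul_of_nonneg_left (pow_le_one₀ (by linarith) (by linarith)) h0
      _ = ρ := mul_one _
  have e2 : |(1-ρ)*(-ρ)^n| ≤ 1 - ρ := by
    rw [abs_mul, abs_of_nonneg (by linarith : (0:ℝ) ≤ 1-ρ), abs_pow, abs_neg,
      abs_of_nonneg h0]
    calc (1-ρ) * ρ^n ≤ (1-ρ) * 1 :=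
          mul_le_mul_of_nonneg_left (pow_le_one₀ h0 h1) (by linarith)
      _ = 1 - ρ := mul_one _
  calc |Efun ρ n| ≤ |ρ*(1-ρ)^n| + |(1-ρ)*(-ρ)^n| := abs_add_le _ _
    _ ≤ ρ + (1 - ρ) := add_le_add e1 e2
    _ = 1 := by ring

lemma sum_wgt_mul (ρ : ℝ) (B : Finset ℤ) (i j k l : ℤ)
    (hi : i ∈ B) (hj : j ∈ B) (hk : k ∈ B) (hl : l ∈ B) :
    ∑ S ∈ B.powerset, wgt ρ B S *
      (((if i ∈ S then (1:ℝ) else 0) - ρ) * (((if j ∈ S then (1:ℝ) else 0) - ρ) *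
        (((if k ∈ S then (1:ℝ) else 0) - ρ) * ((if l ∈ S then (1:ℝ) else 0) - ρ))))
      = ∏ x ∈ B, Efun ρ (cnt i j k l x) := by
  have key : ∀ S ∈ B.powerset, wgt ρ B S *
      (((if i ∈ S then (1:ℝ) else 0) - ρ) * (((if j ∈ S then (1:ℝ) else 0) - ρ) *
        (((if k ∈ S then (1:ℝ) else 0) - ρ) * ((if l ∈ S then (1:ℝ) else 0) - ρ))))
      = ∏ x ∈ B, (if x ∈ S then ρ*(1-ρ)^(cnt i j k l x)
          else (1-ρ)*(-ρ)^(cnt i j k l x)) := by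
    intro S _
    have hy : ∀ a : ℤ, ((if a ∈ S then (1:ℝ) else 0) - ρ)
        = (if a ∈ S then 1-ρ else -ρ) := by
      intro a; split_ifs <;> ring
    have hpow : ∀ a, a ∈ B →
        (∏ x ∈ B, (if x ∈ S then (1:ℝ)-ρ else -ρ)^(if x = a then 1 else 0))
          = (if a ∈ S then (1:ℝ)-ρ else -ρ) := by
      intro a ha
      have hstep : ∀ x ∈ B, (if x ∈ S then (1:ℝ)-ρ else -ρ)^(if x = a then 1 else 0)
          = (if x = a then (if x ∈ S then (1:ℝ)-ρ else -ρ) else 1) := by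
        intro x _; split_ifs with h <;> simp
      rw [Finset.prod_congr rfl hstep, Finset.prod_ite_eq' B a
        (fun x => (if x ∈ S then (1:ℝ)-ρ else -ρ)), if_pos ha]
    have hY4 : ∏ x ∈ B, ((if x ∈ S then (1:ℝ)-ρ else -ρ)^(cnt i j k l x))
        = (if i ∈ S then (1:ℝ)-ρ else -ρ) * ((if j ∈ S then (1:ℝ)-ρ else -ρ)
            * ((if k ∈ S then (1:ℝ)-ρ else -ρ) * (if l ∈ S then (1:ℝ)-ρ else -ρ))) := by
      have expand : ∀ x ∈ B, (if x ∈ S then (1:ℝ)-ρ else -ρ)^(cnt i j k l x)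
          = (if x ∈ S then (1:ℝ)-ρ else -ρ)^(if x = i then 1 else 0)
            * ((if x ∈ S then (1:ℝ)-ρ else -ρ)^(if x = j then 1 else 0)
              * ((if x ∈ S then (1:ℝ)-ρ else -ρ)^(if x = k then 1 else 0)
                * (if x ∈ S then (1:ℝ)-ρ else -ρ)^(if x = l then 1 else 0))) := by
        intro x _
        rw [cnt, pow_add, pow_add, pow_add]
        ring
      rw [Finset.prod_congr rfl expand, Finset.prod_mul_distrib,
        Finset.prod_mul_distrib, Finset.prod_mul_distrib,
        hpow i hi, hpow j hj, hpow k hk, hpow l hl]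
    rw [hy i, hy j, hy k, hy l, ← hY4, wgt, ← Finset.prod_mul_distrib]
    exact Finset.prod_congr rfl fun x _ => by split_ifs <;> rfl
  rw [Finset.sum_congr rfl key, sum_powerset_prod_ite]
  exact Finset.prod_congr rfl fun x _ => rfl

lemma tuple_bound {ρ : ℝ} (h0 : 0 ≤ ρ) (h1 : ρ ≤ 1) (B : Finset ℤ) (i j k l : ℤ)
    (hi : i ∈ B) (hj : j ∈ B) (hk : k ∈ B) (hl : l ∈ B) :
    ∏ x ∈ B, Efun ρ (cnt i j k l x)
      ≤ (if i = j ∧ k = l then (1:ℝ) else 0) + (if i = k ∧ j = l then (1:ℝ) else 0)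
        + (if i = l ∧ j = k then (1:ℝ) else 0) := by
  by_cases hpair : (i = j ∧ k = l) ∨ (i = k ∧ j = l) ∨ (i = l ∧ j = k)
  · have hle1 : ∏ x ∈ B, Efun ρ (cnt i j k l x) ≤ 1 := by
      refine le_trans (le_abs_self _) ?_
      rw [Finset.abs_prod]
      exact Finset.prod_le_one (fun x _ => abs_nonneg _)
        (fun x _ => abs_Efun_le h0 h1 _)
    have hge1 : (1:ℝ) ≤ (if i = j ∧ k = l then (1:ℝ) else 0)
        + (if i = k ∧ j = l then (1:ℝ) else 0) + (if i = l ∧ j = k then (1:ℝ) else 0) := by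
      rcases hpair with h | h | h
      · rw [if_pos h]
        have : (0:ℝ) ≤ (if i = k ∧ j = l then (1:ℝ) else 0) := by positivity
        have : (0:ℝ) ≤ (if i = l ∧ j = k then (1:ℝ) else 0) := by positivity
        split_ifs <;> linarith
      · rw [if_pos h]; split_ifs <;> linarith
      · rw [if_pos h]; split_ifs <;> linarith
    exact hle1.trans hge1
  · push_neg at hpair
    obtain ⟨hn1, hn2, hn3⟩ := hpair
    have hzero : ∃ a ∈ B, cnt i j k l a = 1 := by
      by_cases hij : i = j
      · by_cases hkl : k = l
        · exact absurd hkl (hn1 hij)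
        · by_cases hik : i = k
          · refine ⟨l, hl, ?_⟩
            have h1' : l ≠ i := fun h => hkl (hik.symm.trans h.symm)
            have h2' : l ≠ j := fun h => h1' (h.trans hij.symm)
            have h3' : l ≠ k := fun h => hkl h.symm
            simp [cnt, h1', h2', h3']
          · refine ⟨k, hk, ?_⟩
            have h1' : k ≠ i := fun h => hik h.symm
            have h2' : k ≠ j := fun h => h1' (h.trans hij.symm)
            have h3' : k ≠ l := hkl
            simp [cnt, h1', h2', h3']
      · by_cases hik : i = k
        · by_cases hjl : j = l
          · exact absurd hjl (hn2 hik)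
          · by_cases hil : i = l
            · refine ⟨j, hj, ?_⟩
              have h1' : j ≠ i := fun h => hij h.symm
              have h2' : j ≠ k := fun h => h1' (h.trans hik.symm)
              have h3' : j ≠ l := hjl
              simp [cnt, h1', h2', h3']
            · refine ⟨l, hl, ?_⟩
              have h1' : l ≠ i := fun h => hil h.symm
              have h2' : l ≠ j := fun h => hjl h.symm
              have h3' : l ≠ k := fun h => h1' (h.trans hik.symm)
              simp [cnt, h1', h2', h3']
        · by_cases hil : i = l
          · by_cases hjk : j = k
            · exact absurd hjk (hn3 hil)
            · refine ⟨j, hj, ?_⟩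
              have h1' : j ≠ i := fun h => hij h.symm
              have h2' : j ≠ k := hjk
              have h3' : j ≠ l := fun h => hij (hil.trans h.symm)
              simp [cnt, h1', h2', h3']
          · refine ⟨i, hi, ?_⟩
            have h2' : i ≠ j := hij
            have h3' : i ≠ k := hik
            have h4' : i ≠ l := hil
            simp [cnt, h2', h3', h4']
    obtain ⟨a, ha, hcnt⟩ := hzero
    rw [Finset.prod_eq_zero ha (by rw [hcnt]; exact Efun_one ρ)]
    positivity

lemma sum_pow_four (B : Finset ℤ) (v : ℤ → ℝ) :
    (∑ x ∈ B, v x)^4 = ∑ i ∈ B, ∑ j ∈ B, ∑ k ∈ B, ∑ l ∈ B, v i * (v j * (v k * v l)) := by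
  rw [show ((∑ x ∈ B, v x)^4) = (∑ x ∈ B, v x) * ((∑ x ∈ B, v x)
      * ((∑ x ∈ B, v x) * (∑ x ∈ B, v x))) from by ring]
  simp only [Finset.sum_mul, Finset.mul_sum]
  exact Finset.sum_congr rfl fun i _ => Finset.sum_congr rfl fun j _ =>
    Finset.sum_congr rfl fun k _ => Finset.sum_congr rfl fun l _ => by ring

lemma count1 (B : Finset ℤ) :
    ∑ i ∈ B, ∑ j ∈ B, ∑ k ∈ B, ∑ l ∈ B, (if i = j ∧ k = l then (1:ℝ) else 0)
      = (B.card:ℝ)^2 := by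
  have h1 : ∀ i ∈ B, ∀ j ∈ B, ∑ k ∈ B, ∑ l ∈ B, (if i = j ∧ k = l then (1:ℝ) else 0)
      = if i = j then (B.card:ℝ) else 0 := by
    intro i _ j _
    by_cases hij : i = j
    · rw [if_pos hij]
      have hin : ∀ k ∈ B, ∑ l ∈ B, (if i = j ∧ k = l then (1:ℝ) else 0) = 1 := by
        intro k hk
        have hstep : ∀ l ∈ B, (if i = j ∧ k = l then (1:ℝ) else 0)
            = (if k = l then (1:ℝ) else 0) := fun l _ => by simp [hij]
        rw [Finset.sum_congr rfl hstep, Finset.sum_ite_eq B k (fun _ => (1:ℝ)), if_pos hk]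
      rw [Finset.sum_congr rfl hin, Finset.sum_const, nsmul_eq_mul, mul_one]
    · simp [hij]
  calc ∑ i ∈ B, ∑ j ∈ B, ∑ k ∈ B, ∑ l ∈ B, (if i = j ∧ k = l then (1:ℝ) else 0)
      = ∑ i ∈ B, ∑ j ∈ B, (if i = j then (B.card:ℝ) else 0) :=
        Finset.sum_congr rfl fun i hi => Finset.sum_congr rfl fun j hj => h1 i hi j hj
    _ = ∑ _i ∈ B, (B.card:ℝ) := Finset.sum_congr rfl fun i hi => by
        rw [Finset.sum_ite_eq B i (fun _ => (B.card:ℝ)), if_pos hi]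
    _ = (B.card:ℝ)^2 := by rw [Finset.sum_const, nsmul_eq_mul]; ring

lemma count2 (B : Finset ℤ) :
    ∑ i ∈ B, ∑ j ∈ B, ∑ k ∈ B, ∑ l ∈ B, (if i = k ∧ j = l then (1:ℝ) else 0)
      = (B.card:ℝ)^2 := by
  have h1 : ∀ i ∈ B, ∀ j ∈ B, ∑ k ∈ B, ∑ l ∈ B, (if i = k ∧ j = l then (1:ℝ) else 0)
      = 1 := by
    intro i hi j hj
    have hin : ∀ k ∈ B, ∑ l ∈ B, (if i = k ∧ j = l then (1:ℝ) else 0)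
        = (if i = k then (1:ℝ) else 0) := by
      intro k _
      by_cases hik : i = k
      · rw [if_pos hik]
        have hstep : ∀ l ∈ B, (if i = k ∧ j = l then (1:ℝ) else 0)
            = (if j = l then (1:ℝ) else 0) := fun l _ => by simp [hik]
        rw [Finset.sum_congr rfl hstep, Finset.sum_ite_eq B j (fun _ => (1:ℝ)), if_pos hj]
      · simp [hik]
    rw [Finset.sum_congr rfl hin, Finset.sum_ite_eq B i (fun _ => (1:ℝ)), if_pos hi]
  calc ∑ i ∈ B, ∑ j ∈ B, ∑ k ∈ B, ∑ l ∈ B, (if i = k ∧ j = l then (1:ℝ) else 0)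
      = ∑ _i ∈ B, ∑ _j ∈ B, (1:ℝ) :=
        Finset.sum_congr rfl fun i hi => Finset.sum_congr rfl fun j hj => h1 i hi j hj
    _ = (B.card:ℝ)^2 := by simp [Finset.sum_const, nsmul_eq_mul]; ring

lemma count3 (B : Finset ℤ) :
    ∑ i ∈ B, ∑ j ∈ B, ∑ k ∈ B, ∑ l ∈ B, (if i = l ∧ j = k then (1:ℝ) else 0)
      = (B.card:ℝ)^2 := by
  have h1 : ∀ i ∈ B, ∀ j ∈ B, ∑ k ∈ B, ∑ l ∈ B, (if i = l ∧ j = k then (1:ℝ) else 0)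
      = 1 := by
    intro i hi j hj
    have hin : ∀ k ∈ B, ∑ l ∈ B, (if i = l ∧ j = k then (1:ℝ) else 0)
        = (if j = k then (1:ℝ) else 0) := by
      intro k _
      by_cases hjk : j = k
      · rw [if_pos hjk]
        have hstep : ∀ l ∈ B, (if i = l ∧ j = k then (1:ℝ) else 0)
            = (if i = l then (1:ℝ) else 0) := fun l _ => by simp [hjk]
        rw [Finset.sum_congr rfl hstep, Finset.sum_ite_eq B i (fun _ => (1:ℝ)), if_pos hi]
      · simp [hjk]
    rw [Finset.sum_congr rfl hin, Finset.sum_ite_eq B j (fun _ => (1:ℝ)), if_pos hj]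
  calc ∑ i ∈ B, ∑ j ∈ B, ∑ k ∈ B, ∑ l ∈ B, (if i = l ∧ j = k then (1:ℝ) else 0)
      = ∑ _i ∈ B, ∑ _j ∈ B, (1:ℝ) :=
        Finset.sum_congr rfl fun i hi => Finset.sum_congr rfl fun j hj => h1 i hi j hj
    _ = (B.card:ℝ)^2 := by simp [Finset.sum_const, nsmul_eq_mul]; ring

lemma fourth_moment {ρ : ℝ} (h0 : 0 ≤ ρ) (h1 : ρ ≤ 1) (B : Finset ℤ) :
    ∑ S ∈ B.powerset, wgt ρ B S * ((S.card:ℝ) - B.card*ρ)^4 ≤ 3*(B.card:ℝ)^2 := by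
  have hY : ∀ S ∈ B.powerset, ((S.card:ℝ) - B.card*ρ)
      = ∑ x ∈ B, ((if x ∈ S then (1:ℝ) else 0) - ρ) := by
    intro S hS
    rw [Finset.mem_powerset] at hS
    rw [Finset.sum_sub_distrib, Finset.sum_const, nsmul_eq_mul]
    congr 1
    rw [Finset.sum_ite_mem, Finset.inter_eq_right.mpr hS, Finset.sum_const,
      nsmul_eq_mul, mul_one]
  have step1 : ∑ S ∈ B.powerset, wgt ρ B S * ((S.card:ℝ) - B.card*ρ)^4
      = ∑ i ∈ B, ∑ j ∈ B, ∑ k ∈ B, ∑ l ∈ B, ∑ S ∈ B.powerset, wgt ρ B S *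
          (((if i ∈ S then (1:ℝ) else 0) - ρ) * (((if j ∈ S then (1:ℝ) else 0) - ρ) *
            (((if k ∈ S then (1:ℝ) else 0) - ρ) * ((if l ∈ S then (1:ℝ) else 0) - ρ)))) := by
    have e1 : ∀ S ∈ B.powerset, wgt ρ B S * ((S.card:ℝ) - B.card*ρ)^4
        = ∑ i ∈ B, ∑ j ∈ B, ∑ k ∈ B, ∑ l ∈ B, wgt ρ B S *
            (((if i ∈ S then (1:ℝ) else 0) - ρ) * (((if j ∈ S then (1:ℝ) else 0) - ρ) *
              (((if k ∈ S then (1:ℝ) else 0) - ρ) * ((if l ∈ S then (1:ℝ) else 0) - ρ)))) := by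
      intro S hS
      rw [hY S hS, sum_pow_four]
      simp only [Finset.mul_sum]
    rw [Finset.sum_congr rfl e1, Finset.sum_comm]
    refine Finset.sum_congr rfl fun i _ => ?_
    rw [Finset.sum_comm]
    refine Finset.sum_congr rfl fun j _ => ?_
    rw [Finset.sum_comm]
    refine Finset.sum_congr rfl fun k _ => ?_
    rw [Finset.sum_comm]
  rw [step1]
  have step2 : ∑ i ∈ B, ∑ j ∈ B, ∑ k ∈ B, ∑ l ∈ B, ∑ S ∈ B.powerset, wgt ρ B S *
          (((if i ∈ S then (1:ℝ) else 0) - ρ) * (((if j ∈ S then (1:ℝ) else 0) - ρ) *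
            (((if k ∈ S then (1:ℝ) else 0) - ρ) * ((if l ∈ S then (1:ℝ) else 0) - ρ))))
      ≤ ∑ i ∈ B, ∑ j ∈ B, ∑ k ∈ B, ∑ l ∈ B,
          ((if i = j ∧ k = l then (1:ℝ) else 0) + (if i = k ∧ j = l then (1:ℝ) else 0)
            + (if i = l ∧ j = k then (1:ℝ) else 0)) := by
    refine Finset.sum_le_sum fun i hi => Finset.sum_le_sum fun j hj =>
      Finset.sum_le_sum fun k hk => Finset.sum_le_sum fun l hl => ?_
    rw [sum_wgt_mul ρ B i j k l hi hj hk hl]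
    exact tuple_bound h0 h1 B i j k l hi hj hk hl
  refine step2.trans ?_
  simp only [Finset.sum_add_distrib]
  rw [count1, count2, count3]
  ring_nf
  exact le_refl _

lemma phi_sq_bound (A : Finset ℤ) (f : Cfg → ℝ) (ρ : ℝ)
    (hφ : phi A f ρ = 0) (hφ' : deriv (phi A f) ρ = 0) :
    ∃ M : ℝ, 0 ≤ M ∧ ∀ x ∈ Set.Icc (0:ℝ) 1, |phi A f x| ≤ M * (x - ρ)^2 := by
  set P : Polynomial ℝ := ∑ S ∈ A.powerset,
    Polynomial.C (f (cfgOf S)) * (Polynomial.X^S.card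
      * (1 - Polynomial.X)^(A.card - S.card)) with hPdef
  have hP : ∀ x, phi A f x = P.eval x := by
    intro x
    rw [hPdef, Polynomial.eval_finset_sum, phi]
    refine Finset.sum_congr rfl fun S _ => ?_
    simp [Polynomial.eval_mul, Polynomial.eval_pow]
    ring
  have hfun : phi A f = fun x => P.eval x := funext hP
  have hroot : P.eval ρ = 0 := by rw [← hP]; exact hφ
  rw [hfun, Polynomial.deriv] at hφ'
  obtain ⟨Q, hQ⟩ := (Polynomial.dvd_iff_isRoot (p := P) (a := ρ)).mpr hroot
  have hQroot : Q.eval ρ = 0 := by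
    have hd := congrArg Polynomial.derivative hQ
    rw [Polynomial.derivative_mul, Polynomial.derivative_X_sub_C] at hd
    have := congrArg (Polynomial.eval ρ) hd
    simp [Polynomial.eval_add, Polynomial.eval_mul] at this
    rw [this] at hφ'
    simpa using hφ'
  obtain ⟨R, hR⟩ := (Polynomial.dvd_iff_isRoot (p := Q) (a := ρ)).mpr hQroot
  obtain ⟨M, hM⟩ := IsCompact.exists_bound_of_continuousOn (isCompact_Icc (a := (0:ℝ)) (b := 1))
    (Polynomial.continuous R).continuousOn
  refine ⟨max M 0, le_max_right _ _, fun x hx => ?_⟩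
  have hval : phi A f x = (x - ρ)^2 * R.eval x := by
    rw [hP x, hQ, hR]
    simp [Polynomial.eval_mul]
    ring
  rw [hval, abs_mul, abs_of_nonneg (by positivity : (0:ℝ) ≤ (x - ρ)^2)]
  calc (x - ρ)^2 * |R.eval x| ≤ (x - ρ)^2 * max M 0 := by
        refine mul_le_mul_of_nonneg_left ?_ (by positivity)
        exact le_trans (by simpa using hM x hx) (le_max_left _ _)
    _ = max M 0 * (x - ρ)^2 := by ring



set_option maxHeartbeats 1000000 in
/-- **Variance bound for the conditioned function, second order** (Proposition 3.2 ii).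
If `f` is local with support in `{1,…,ℓ₀}`, `ρ ∈ (0,1)`, `φ_f(ρ) = 0` and `φ_f'(ρ) = 0`,
then there is a constant `c = c(f,ρ)` such that `Var(ψ_f(ℓ); ν_ρ) ≤ c/ℓ²` for every
`ℓ ≥ ℓ₀`. -/
theorem variance_psi_second_order
    (ℓ₀ : ℕ) (f : Cfg → ℝ) (hf : LocalOn (Finset.Icc (1 : ℤ) (ℓ₀ : ℤ)) f)
    (ρ : ℝ) (hρ : ρ ∈ Set.Ioo (0 : ℝ) 1)
    (hφ : phi (Finset.Icc (1 : ℤ) (ℓ₀ : ℤ)) f ρ = 0)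
    (hφ' : deriv (phi (Finset.Icc (1 : ℤ) (ℓ₀ : ℤ)) f) ρ = 0) :
    ∃ c : ℝ, ∀ μ : Measure Cfg, IsBernoulliProduct ρ μ → ∀ ℓ : ℕ, ℓ₀ ≤ ℓ →
      Var μ (psiFun ℓ f) ≤ c / (ℓ : ℝ) ^ 2 := by
  have hρ0 : (0:ℝ) ≤ ρ := le_of_lt hρ.1
  have hρ1 : ρ ≤ 1 := le_of_lt hρ.2
  have hfB : LocalOn (Bset ℓ₀) f := hf
  obtain ⟨M, hM0, hMb⟩ := phi_sq_bound (Bset ℓ₀) f ρ hφ hφ'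
  set F := LocF ℓ₀ f with hFdef
  have hF0 : 0 ≤ F := LocF_nonneg ℓ₀ f
  set Cψ : ℝ := F * (4*(ℓ₀:ℝ)^2 + ℓ₀) with hCdef
  have hC0 : 0 ≤ Cψ := mul_nonneg hF0 (by positivity)
  refine ⟨4*(ℓ₀:ℝ)^2 * F^2 + (6*M^2 + 2*Cψ^2), fun μ hμ ℓ hle => ?_⟩
  have hVar : Var μ (psiFun ℓ f)
      ≤ ∑ S ∈ (Bset ℓ).powerset, wgt ρ (Bset ℓ) S * (condAvg ℓ S.card f)^2 :=
    var_le_second_moment hμ ℓ (fun m => condAvg ℓ m f)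
  rcases Nat.eq_zero_or_pos ℓ with hℓ0 | hℓpos
  · subst hℓ0
    have hℓ₀0 : ℓ₀ = 0 := Nat.le_zero.mp hle
    subst hℓ₀0
    have hBempty : Bset 0 = (∅ : Finset ℤ) := by
      rw [Bset]; apply Finset.Icc_eq_empty; norm_num
    have hf0 : f (cfgOf ∅) = 0 := by
      have h := hφ
      rw [show Finset.Icc (1:ℤ) ((0:ℕ):ℤ) = (∅ : Finset ℤ) from hBempty] at h
      simpa [phi] using h
    have hzero : ∑ S ∈ (Bset 0).powerset, wgt ρ (Bset 0) S * (condAvg 0 S.card f)^2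
        = 0 := by
      rw [hBempty]
      rw [Finset.powerset_empty, Finset.sum_singleton]
      have : condAvg 0 (∅ : Finset ℤ).card f = 0 := by
        rw [Finset.card_empty, condAvg]
        rw [show Finset.Icc (1:ℤ) ((0:ℕ):ℤ) = (∅ : Finset ℤ) from hBempty]
        simp [Finset.filter_singleton, hf0]
      rw [this]
      ring
    rw [show ((0:ℕ):ℝ)^2 = 0 by norm_num, div_zero]
    exact le_of_le_of_eq hVar hzero
  · have hL : (0:ℝ) < ℓ := by exact_mod_cast hℓpos
    by_cases h2l : 2*ℓ₀ ≤ ℓ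
    · -- main branch
      have hper : ∀ S ∈ (Bset ℓ).powerset,
          wgt ρ (Bset ℓ) S * (condAvg ℓ S.card f)^2
            ≤ wgt ρ (Bset ℓ) S * (2*M^2*((S.card:ℝ)/ℓ - ρ)^4 + 2*Cψ^2/ℓ^2) := by
        intro S hS
        refine mul_le_mul_of_nonneg_left ?_ (wgt_nonneg hρ0 hρ1 _ _)
        have hScard : S.card ≤ ℓ := by
          have := Finset.card_le_card (Finset.mem_powerset.mp hS)
          rwa [card_Bset] at this
        have hp0 : 0 ≤ (S.card:ℝ)/ℓ := by positivity
        have hp1 : (S.card:ℝ)/ℓ ≤ 1 := by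
          rw [div_le_one hL]; exact_mod_cast hScard
        have h1 := condAvg_close ℓ₀ ℓ S.card f hfB h2l hℓpos hScard
        have h2 := hMb ((S.card:ℝ)/ℓ) ⟨hp0, hp1⟩
        have e1 : LocF ℓ₀ f * ((4*(ℓ₀:ℝ)^2 + ℓ₀)/ℓ) = Cψ/ℓ := by
          rw [hCdef, hFdef]; ring
        rw [e1] at h1
        set a := condAvg ℓ S.card f
        set b := phi (Bset ℓ₀) f ((S.card:ℝ)/ℓ)
        have k1 : (a - b)^2 ≤ (Cψ/ℓ)^2 := by
          have := pow_le_pow_left₀ (abs_nonneg (a-b)) h1 2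
          rwa [sq_abs] at this
        have k2 : b^2 ≤ (M*((S.card:ℝ)/ℓ-ρ)^2)^2 := by
          have := pow_le_pow_left₀ (abs_nonneg b) h2 2
          rwa [sq_abs] at this
        have k3 : a^2 ≤ 2*b^2 + 2*(a-b)^2 := by nlinarith [sq_nonneg (b - (a - b))]
        calc a^2 ≤ 2*(M*((S.card:ℝ)/ℓ-ρ)^2)^2 + 2*(Cψ/ℓ)^2 := by linarith
          _ = 2*M^2*((S.card:ℝ)/ℓ - ρ)^4 + 2*Cψ^2/ℓ^2 := by ring
      refine le_trans hVar (le_trans (Finset.sum_le_sum hper) ?_)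
      have hexp : ∑ S ∈ (Bset ℓ).powerset,
          wgt ρ (Bset ℓ) S * (2*M^2*((S.card:ℝ)/ℓ - ρ)^4 + 2*Cψ^2/ℓ^2)
          = 2*M^2 * (∑ S ∈ (Bset ℓ).powerset,
              wgt ρ (Bset ℓ) S * ((S.card:ℝ)/ℓ - ρ)^4) + 2*Cψ^2/ℓ^2 := by
        simp only [mul_add]
        rw [Finset.sum_add_distrib]
        congr 1
        · rw [Finset.mul_sum]
          exact Finset.sum_congr rfl fun S _ => by ring
        · rw [← Finset.sum_mul, wgt_sum, one_mul]
      have hmom : ∑ S ∈ (Bset ℓ).powerset,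
          wgt ρ (Bset ℓ) S * ((S.card:ℝ)/ℓ - ρ)^4 ≤ 3/(ℓ:ℝ)^2 := by
        have heq : ∀ S ∈ (Bset ℓ).powerset,
            wgt ρ (Bset ℓ) S * ((S.card:ℝ)/ℓ - ρ)^4
              = (wgt ρ (Bset ℓ) S * ((S.card:ℝ) - (ℓ:ℝ)*ρ)^4) / (ℓ:ℝ)^4 := by
          intro S _
          have hd : (S.card:ℝ)/ℓ - ρ = ((S.card:ℝ) - (ℓ:ℝ)*ρ)/ℓ := by
            field_simp
          rw [hd, div_pow]
          ring
        rw [Finset.sum_congr rfl heq, ← Finset.sum_div]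
        have h4 := fourth_moment hρ0 hρ1 (Bset ℓ)
        rw [card_Bset] at h4
        calc (∑ S ∈ (Bset ℓ).powerset,
              wgt ρ (Bset ℓ) S * ((S.card:ℝ) - (ℓ:ℝ)*ρ)^4) / (ℓ:ℝ)^4
            ≤ (3*(ℓ:ℝ)^2) / (ℓ:ℝ)^4 :=
              div_le_div_of_nonneg_right h4 (by positivity) |>.trans (le_refl _)
          _ = 3/(ℓ:ℝ)^2 := by
              field_simp
      rw [hexp]
      calc 2*M^2 * (∑ S ∈ (Bset ℓ).powerset,
            wgt ρ (Bset ℓ) S * ((S.card:ℝ)/ℓ - ρ)^4) + 2*Cψ^2/ℓ^2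
          ≤ 2*M^2 * (3/(ℓ:ℝ)^2) + 2*Cψ^2/ℓ^2 :=
            add_le_add (mul_le_mul_of_nonneg_left hmom (by positivity)) (le_refl _)
        _ = (6*M^2 + 2*Cψ^2)/(ℓ:ℝ)^2 := by ring
        _ ≤ (4*(ℓ₀:ℝ)^2 * F^2 + (6*M^2 + 2*Cψ^2))/(ℓ:ℝ)^2 := by
            apply div_le_div_of_nonneg_right ?_ (by positivity)
            nlinarith [sq_nonneg F, sq_nonneg ((ℓ₀:ℝ))]
    · -- small branch: ℓ < 2ℓ₀
      have hll : (ℓ:ℝ) ≤ 2*(ℓ₀:ℝ) := by exact_mod_cast (by omega : ℓ ≤ 2*ℓ₀)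
      have hper : ∀ S ∈ (Bset ℓ).powerset,
          wgt ρ (Bset ℓ) S * (condAvg ℓ S.card f)^2 ≤ wgt ρ (Bset ℓ) S * F^2 := by
        intro S hS
        refine mul_le_mul_of_nonneg_left ?_ (wgt_nonneg hρ0 hρ1 _ _)
        have hScard : S.card ≤ ℓ := by
          have := Finset.card_le_card (Finset.mem_powerset.mp hS)
          rwa [card_Bset] at this
        have hb := condAvg_bound ℓ₀ ℓ S.card f hfB hScard
        have := pow_le_pow_left₀ (abs_nonneg (condAvg ℓ S.card f)) hb 2
        rwa [sq_abs] at this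
      refine le_trans hVar (le_trans (Finset.sum_le_sum hper) ?_)
      rw [← Finset.sum_mul, wgt_sum, one_mul]
      rw [le_div_iff₀ (by positivity : (0:ℝ) < (ℓ:ℝ)^2)]
      have key : (ℓ:ℝ)^2 ≤ 4*(ℓ₀:ℝ)^2 := by nlinarith
      have key2 : F^2 * (ℓ:ℝ)^2 ≤ F^2 * (4*(ℓ₀:ℝ)^2) :=
        mul_le_mul_of_nonneg_left key (sq_nonneg F)
      nlinarith [sq_nonneg M, sq_nonneg Cψ]

end
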